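/- If (μ_t, φ_t) and (μ'_t, φ'_t) are equivalent formal deformations of a 3-LieDer pair (L, φ_L) via Φ_t = Id + tΦ_1 + ..., then their infinitesimals are cohomologous: (μ_1, φ_1) - (μ'_1, φ'_1) = ∂Φ_1, explicitly μ_1(x,y,z) - μ'_1(x,y,z) = [Φ_1(x),y,z] + [x,Φ_1(y),z] + [x,y,Φ_1(z)] - Φ_1([x,y,z]) and φ_1 - φ'_1 = φ_L ∘ Φ_1 - Φ_1 ∘ φ_L (up to sign conventions). -/

import Mathlib

/-- A 3-Lie algebra: a module with a trilinear skew-symmetric bracket satisfying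
the fundamental (Filippov) identity. -/
structure ThreeLieAlgebra (K L : Type) [Field K] [AddCommGroup L] [Module K L] where
  br : L →ₗ[K] L →ₗ[K] L →ₗ[K] L
  skew₁₂ : ∀ x y z, br x y z = - br y x z
  skew₂₃ : ∀ x y z, br x y z = - br x z y
  fund : ∀ x y u v w,
    br x y (br u v w) = br (br x y u) v w + br u (br x y v) w + br u v (br x y w)

/-- A derivation of a 3-Lie algebra. -/
def IsDer {K L : Type} [Field K] [AddCommGroup L] [Module K L]
    (A : ThreeLieAlgebra K L) (φ : L →ₗ[K] L) : Prop :=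
  ∀ x y z, φ (A.br x y z) = A.br (φ x) y z + A.br x (φ y) z + A.br x y (φ z)

/-- The degree-`n` component of the 3-Lie deformation equation for a family `μ`. -/
def DeformEq {K L : Type} [Field K] [AddCommGroup L] [Module K L]
    (μ : ℕ → (L →ₗ[K] L →ₗ[K] L →ₗ[K] L)) (n : ℕ) : Prop :=
  ∀ x y z v w : L,
    ∑ ij ∈ Finset.HasAntidiagonal.antidiagonal n, μ ij.1 x y (μ ij.2 z v w)
      = ∑ ij ∈ Finset.HasAntidiagonal.antidiagonal n,
          (μ ij.1 (μ ij.2 x y z) v w + μ ij.1 z (μ ij.2 x y v) w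
            + μ ij.1 z v (μ ij.2 x y w))

/-- The degree-`n` component of the equation saying `φ_t` is a derivation for `μ_t`. -/
def DerivEq {K L : Type} [Field K] [AddCommGroup L] [Module K L]
    (μ : ℕ → (L →ₗ[K] L →ₗ[K] L →ₗ[K] L)) (φ : ℕ → (L →ₗ[K] L)) (n : ℕ) : Prop :=
  ∀ x y z : L,
    ∑ ij ∈ Finset.HasAntidiagonal.antidiagonal n, φ ij.1 (μ ij.2 x y z)
      = ∑ ij ∈ Finset.HasAntidiagonal.antidiagonal n,
          (μ ij.1 (φ ij.2 x) y z + μ ij.1 x (φ ij.2 y) z + μ ij.1 x y (φ ij.2 z))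

/-- A formal one-parameter deformation `(μ_t = Σ tⁱ μ_i, φ_t = Σ tⁱ φ_i)` of a
3-LieDer pair `(L, φL)`, encoded by its families of coefficients. -/
structure IsFormalDeformation {K L : Type} [Field K] [AddCommGroup L] [Module K L]
    (A : ThreeLieAlgebra K L) (φL : L →ₗ[K] L)
    (μ : ℕ → (L →ₗ[K] L →ₗ[K] L →ₗ[K] L)) (φ : ℕ → (L →ₗ[K] L)) : Prop where
  init_br : μ 0 = A.br
  init_der : φ 0 = φL
  skew₁₂ : ∀ i x y z, μ i x y z = - μ i y x z
  skew₂₃ : ∀ i x y z, μ i x y z = - μ i x z y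
  deform : ∀ n, DeformEq μ n
  deriv : ∀ n, DerivEq μ φ n

/-- An order-`N` one-parameter deformation of a 3-LieDer pair `(L, φL)`. -/
structure IsDeformationOfOrder {K L : Type} [Field K] [AddCommGroup L] [Module K L]
    (N : ℕ) (A : ThreeLieAlgebra K L) (φL : L →ₗ[K] L)
    (μ : ℕ → (L →ₗ[K] L →ₗ[K] L →ₗ[K] L)) (φ : ℕ → (L →ₗ[K] L)) : Prop where
  init_br : μ 0 = A.br
  init_der : φ 0 = φL
  bound : ∀ i, N < i → μ i = 0 ∧ φ i = 0
  skew₁₂ : ∀ i x y z, μ i x y z = - μ i y x z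
  skew₂₃ : ∀ i x y z, μ i x y z = - μ i x z y
  deform : ∀ n ≤ N, DeformEq μ n
  deriv : ∀ n ≤ N, DerivEq μ φ n

/-- equivalent formal deformations of a 3-LieDer pair have
cohomologous infinitesimals: `(μ₁, φ₁) - (μ'₁, φ'₁) = ∂Φ₁`. -/
theorem equivalent_deformations_cohomologous_infinitesimals
    (K L : Type) [Field K] [AddCommGroup L] [Module K L]
    (A : ThreeLieAlgebra K L) (φL : L →ₗ[K] L) (hφL : IsDer A φL)
    (μ : ℕ → (L →ₗ[K] L →ₗ[K] L →ₗ[K] L)) (φ : ℕ → (L →ₗ[K] L))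
    (hdef : IsFormalDeformation A φL μ φ)
    (μ' : ℕ → (L →ₗ[K] L →ₗ[K] L →ₗ[K] L)) (φ' : ℕ → (L →ₗ[K] L))
    (hdef' : IsFormalDeformation A φL μ' φ')
    (T : ℕ → (L →ₗ[K] L)) (hT0 : T 0 = LinearMap.id)
    (hequiv_br : ∀ (n : ℕ) (x y z : L),
      ∑ ij ∈ Finset.HasAntidiagonal.antidiagonal n, T ij.1 (μ ij.2 x y z)
        = ∑ ij ∈ Finset.HasAntidiagonal.antidiagonal n, ∑ kl ∈ Finset.HasAntidiagonal.antidiagonal ij.2,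
            ∑ mq ∈ Finset.HasAntidiagonal.antidiagonal kl.2,
              μ' ij.1 (T kl.1 x) (T mq.1 y) (T mq.2 z))
    (hequiv_der : ∀ (n : ℕ) (x : L),
      ∑ ij ∈ Finset.HasAntidiagonal.antidiagonal n, T ij.1 (φ ij.2 x)
        = ∑ ij ∈ Finset.HasAntidiagonal.antidiagonal n, φ' ij.1 (T ij.2 x)) :
    (∀ x y z : L,
      μ 1 x y z - μ' 1 x y z
        = A.br (T 1 x) y z + A.br x (T 1 y) z + A.br x y (T 1 z)
          - T 1 (A.br x y z)) ∧
    (∀ x : L, φ 1 x - φ' 1 x = φL (T 1 x) - T 1 (φL x)) := by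
  have had1 : Finset.HasAntidiagonal.antidiagonal 1 = {(0,1),(1,0)} := by decide
  have had0 : Finset.HasAntidiagonal.antidiagonal 0 = {((0:ℕ),(0:ℕ))} := by decide
  constructor
  · intro x y z
    have h := hequiv_br 1 x y z
    rw [had1] at h
    rw [Finset.sum_pair (by decide), Finset.sum_pair (by decide)] at h
    simp only [had0, had1, Finset.sum_singleton, Finset.sum_pair (show ((0:ℕ),(1:ℕ)) ≠ (1,0) by decide),
      hT0, hdef.init_br, hdef'.init_br, LinearMap.id_coe, id_eq] at h
    rw [sub_eq_sub_iff_add_eq_add, h]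
    abel
  · intro x
    have h := hequiv_der 1 x
    rw [had1] at h
    rw [Finset.sum_pair (by decide), Finset.sum_pair (by decide)] at h
    simp only [hT0, hdef.init_der, hdef'.init_der, LinearMap.id_coe, id_eq] at h
    rw [sub_eq_sub_iff_add_eq_add, h]
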